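/- For every s ≥ 1, the s-th Catalan number satisfies (s+1)·C_s = 2·∑_{(r_1,…,r_s) ∈ R_s} (s+1)!/(r_1!·r_2!⋯r_s!); equivalently, C_s = ∑_{(r_1,…,r_s) ∈ R_s} 2·s!/(r_1!⋯r_s!). Here C_s = Nat.catalan s and each term (s+1)!/(r_1!⋯r_s!) is the multinomial coefficient of the tuple (r_1,…,r_s) (which sums to s+1). -/

import Mathlib

/-- The index set `R_s` of degree distributions of trees with `s` edges:
tuples `(r_1,…,r_s)` with `∑ r_j = s+1` and `∑ j·r_j = 2s`. -/
def Rset (s : ℕ) : Finset (Fin s → ℕ) :=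
  (Finset.Nat.antidiagonalTuple s (s + 1)).filter (fun r => ∑ j, (j.1 + 1) * r j = 2 * s)

open Finset PowerSeries in
/-- The sum of multinomial coefficients over `Rset s` equals `C(2s-1, s)`. -/
lemma Rset_sum_multinomial (s : ℕ) (hs : 1 ≤ s) :
    ∑ r ∈ Rset s, Nat.multinomial Finset.univ r = Nat.choose (2 * s - 1) s := by
  set Q : ℤ⟦X⟧ := ∑ j ∈ Finset.range s, (X : ℤ⟦X⟧) ^ j with hQdef
  -- Step 1: coefficient of the multinomial expansion
  have h1 : (PowerSeries.coeff (2 * s)) ((X * Q) ^ (s + 1))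
      = ∑ r ∈ Rset s, (Nat.multinomial Finset.univ r : ℤ) := by
    have hP : (X : ℤ⟦X⟧) * Q = ∑ j : Fin s, (X : ℤ⟦X⟧) ^ (j.1 + 1) := by
      rw [hQdef, Finset.mul_sum,
        ← Fin.sum_univ_eq_sum_range (fun j => (X : ℤ⟦X⟧) * X ^ j) s]
      exact Finset.sum_congr rfl fun j _ => by rw [pow_succ]; ring
    rw [hP, Finset.sum_pow_eq_sum_piAntidiag, map_sum]
    have hterm : ∀ k : Fin s → ℕ,
        (PowerSeries.coeff (2 * s))
          ((Nat.multinomial Finset.univ k : ℤ⟦X⟧) * ∏ j, ((X : ℤ⟦X⟧) ^ (j.1 + 1)) ^ k j)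
        = if ∑ j, (j.1 + 1) * k j = 2 * s then (Nat.multinomial Finset.univ k : ℤ) else 0 := by
      intro k
      have hprod : (∏ j, ((X : ℤ⟦X⟧) ^ (j.1 + 1)) ^ k j)
          = (X : ℤ⟦X⟧) ^ (∑ j, (j.1 + 1) * k j) := by
        rw [← Finset.prod_pow_eq_pow_sum]
        exact Finset.prod_congr rfl fun j _ => by rw [← pow_mul]
      rw [hprod, show ((Nat.multinomial Finset.univ k : ℤ⟦X⟧))
            = PowerSeries.C (Nat.multinomial Finset.univ k : ℤ) by push_cast; rfl,
          PowerSeries.coeff_C_mul, PowerSeries.coeff_X_pow]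
      by_cases h : ∑ j, (j.1 + 1) * k j = 2 * s
      · rw [if_pos h, if_pos h.symm, mul_one]
      · rw [if_neg h, if_neg (fun hh => h hh.symm), mul_zero]
    rw [Finset.sum_congr rfl fun k _ => hterm k]
    rw [Finset.piAntidiag_univ_fin_eq_antidiagonalTuple (s + 1) s, ← Finset.sum_filter]
    rfl
  -- Step 2: `mk 1 = Q + X^s * mk 1`
  have hmk : (PowerSeries.mk 1 : ℤ⟦X⟧) = Q + X ^ s * PowerSeries.mk 1 := by
    ext n
    rw [map_add, hQdef, map_sum]
    simp_rw [PowerSeries.coeff_X_pow]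
    rw [Finset.sum_ite_eq (Finset.range s) n (fun _ => (1 : ℤ))]
    rcases lt_or_ge n s with h | h
    · have h0 : (PowerSeries.coeff n) ((X : ℤ⟦X⟧) ^ s * PowerSeries.mk 1) = 0 :=
        PowerSeries.X_pow_dvd_iff.mp (Dvd.intro _ rfl) n h
      simp [h0, Finset.mem_range, h]
    · obtain ⟨d, rfl⟩ := Nat.exists_eq_add_of_le h
      rw [add_comm s d, PowerSeries.coeff_X_pow_mul]
      simp [Finset.mem_range, Nat.not_lt.mpr (Nat.le_add_left s d), add_comm]
  -- Step 3: low coefficients of `Q^(s+1)` agree with those of `(mk 1)^(s+1)`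
  have hdvd : (X : ℤ⟦X⟧) ^ s ∣ (PowerSeries.mk 1 : ℤ⟦X⟧) ^ (s + 1) - Q ^ (s + 1) := by
    refine dvd_trans ?_ (sub_dvd_pow_sub_pow _ _ (s + 1))
    have : (PowerSeries.mk 1 : ℤ⟦X⟧) - Q = X ^ s * PowerSeries.mk 1 := by
      conv_lhs => rw [hmk]
      ring
    rw [this]
    exact Dvd.intro _ rfl
  have h3 : (PowerSeries.coeff (s - 1)) (Q ^ (s + 1))
      = (PowerSeries.coeff (s - 1)) ((PowerSeries.mk 1 : ℤ⟦X⟧) ^ (s + 1)) := by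
    have h0 := PowerSeries.X_pow_dvd_iff.mp hdvd (s - 1) (by omega)
    rw [map_sub, sub_eq_zero] at h0
    exact h0.symm
  -- Step 4: the coefficient of `(mk 1)^(s+1)`
  have h4 : (PowerSeries.coeff (s - 1)) ((PowerSeries.mk 1 : ℤ⟦X⟧) ^ (s + 1))
      = (Nat.choose (2 * s - 1) s : ℤ) := by
    rw [PowerSeries.mk_one_pow_eq_mk_choose_add, PowerSeries.coeff_mk]
    norm_cast
    congr 1
    omega
  -- Step 5: relate the two coefficients via `X^(s+1)`
  have h5 : (PowerSeries.coeff (2 * s)) ((X * Q) ^ (s + 1))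
      = (PowerSeries.coeff (s - 1)) (Q ^ (s + 1)) := by
    rw [mul_pow, show 2 * s = (s - 1) + (s + 1) by omega, PowerSeries.coeff_X_pow_mul]
  have : (∑ r ∈ Rset s, (Nat.multinomial Finset.univ r : ℤ))
      = (Nat.choose (2 * s - 1) s : ℤ) := by
    rw [← h1, h5, h3, h4]
  exact_mod_cast this

/-- **A Catalan numbers identity**: `(s+1)·C_s = 2·∑_{r ∈ R_s} (s+1)!/(r_1!⋯r_s!)`;
equivalently `C_s = ∑_{r ∈ R_s} 2·s!/(r_1!⋯r_s!)`. -/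
theorem catalan_identity (s : ℕ) (hs : 1 ≤ s) :
    (s + 1) * catalan s = 2 * ∑ r ∈ Rset s, Nat.multinomial Finset.univ r ∧
    catalan s = ∑ r ∈ Rset s, 2 * Nat.factorial s / ∏ j, Nat.factorial (r j) := by
  have hA := Rset_sum_multinomial s hs
  -- first conjunct
  have hchoose : Nat.choose (2 * s) s = 2 * Nat.choose (2 * s - 1) s := by
    obtain ⟨n, rfl⟩ := Nat.exists_eq_add_of_le hs
    rw [show 2 * (1 + n) = 2 * n + 2 by ring, show 2 * n + 2 - 1 = 2 * n + 1 by omega,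
      show 1 + n = n + 1 by ring,
      show 2 * n + 2 = (2 * n + 1) + 1 from rfl, Nat.choose_succ_succ]
    have hsym : Nat.choose (2 * n + 1) n = Nat.choose (2 * n + 1) (n + 1) := by
      rw [← Nat.choose_symm (by omega : n + 1 ≤ 2 * n + 1), show 2 * n + 1 - (n + 1) = n by omega]
    simp only [Nat.succ_eq_add_one]
    omega
  have h1 : (s + 1) * catalan s = 2 * ∑ r ∈ Rset s, Nat.multinomial Finset.univ r := by
    rw [hA, succ_mul_catalan_eq_centralBinom, Nat.centralBinom, hchoose]
  refine ⟨h1, ?_⟩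
  -- second conjunct: termwise exactness
  have hterm : ∀ r ∈ Rset s,
      (2 * Nat.factorial s / ∏ j, Nat.factorial (r j)) * (s + 1)
        = 2 * Nat.multinomial Finset.univ r := by
    intro r hr
    rw [Rset, Finset.mem_filter, Finset.Nat.mem_antidiagonalTuple] at hr
    obtain ⟨hsum, hw⟩ := hr
    set M := Nat.multinomial Finset.univ r with hM
    have hspec : (∏ j, Nat.factorial (r j)) * M = Nat.factorial (s + 1) := by
      rw [hM, Nat.multinomial_spec, hsum]
    have hprodpos : 0 < ∏ j, Nat.factorial (r j) :=
      Finset.prod_pos fun j _ => Nat.factorial_pos _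
    -- (s+1) ∣ M * r j for every j
    have hj : ∀ j : Fin s, (s + 1) ∣ M * r j := by
      intro j
      rcases Nat.eq_zero_or_pos (r j) with h0 | hpos
      · simp [h0]
      · set r' : Fin s → ℕ := Function.update r j (r j - 1) with hr'
        have herase : ∀ i ∈ Finset.univ.erase j, r' i = r i := fun i hi =>
          Function.update_of_ne (Finset.ne_of_mem_erase hi) _ _
        have hsum' : ∑ i, r' i = s := by
          have h2 : r j + ∑ x ∈ Finset.univ.erase j, r x = s + 1 := by
            rw [Finset.add_sum_erase Finset.univ r (Finset.mem_univ j)]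
            exact hsum
          have h3 : ∑ i, r' i = r' j + ∑ x ∈ Finset.univ.erase j, r' x :=
            (Finset.add_sum_erase Finset.univ r' (Finset.mem_univ j)).symm
          have h4 : ∑ x ∈ Finset.univ.erase j, r' x = ∑ x ∈ Finset.univ.erase j, r x :=
            Finset.sum_congr rfl herase
          have h5 : r' j = r j - 1 := by rw [hr']; exact Function.update_self ..
          omega
        have hspec' : (∏ i, Nat.factorial (r' i)) * Nat.multinomial Finset.univ r'
            = Nat.factorial s := by rw [Nat.multinomial_spec, hsum']
        have hprod : ∏ i, Nat.factorial (r i)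
            = r j * ∏ i, Nat.factorial (r' i) := by
          rw [← Finset.mul_prod_erase Finset.univ (fun i => Nat.factorial (r i))
              (Finset.mem_univ j),
            ← Finset.mul_prod_erase Finset.univ (fun i => Nat.factorial (r' i))
              (Finset.mem_univ j)]
          have he : ∏ i ∈ Finset.univ.erase j, Nat.factorial (r' i)
              = ∏ i ∈ Finset.univ.erase j, Nat.factorial (r i) :=
            Finset.prod_congr rfl fun i hi => by rw [herase i hi]
          rw [he, hr', Function.update_self, ← mul_assoc]
          congr 1
          exact (Nat.mul_factorial_pred hpos.ne').symm
        have key : M * r j * ∏ i, Nat.factorial (r' i)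
            = (s + 1) * Nat.multinomial Finset.univ r' * ∏ i, Nat.factorial (r' i) := by
          calc M * r j * ∏ i, Nat.factorial (r' i)
              = (∏ i, Nat.factorial (r i)) * M := by rw [hprod]; ring
            _ = Nat.factorial (s + 1) := hspec
            _ = (s + 1) * Nat.factorial s := Nat.factorial_succ s
            _ = (s + 1) * ((∏ i, Nat.factorial (r' i)) * Nat.multinomial Finset.univ r') := by
                rw [hspec']
            _ = (s + 1) * Nat.multinomial Finset.univ r' * ∏ i, Nat.factorial (r' i) := by ring
        have hpos' : 0 < ∏ i, Nat.factorial (r' i) :=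
          Finset.prod_pos fun i _ => Nat.factorial_pos _
        have : M * r j = (s + 1) * Nat.multinomial Finset.univ r' :=
          Nat.eq_of_mul_eq_mul_right hpos' key
        exact ⟨_, this⟩
    -- (s+1) ∣ 2 * M
    have hdvd2s : (s + 1) ∣ M * (2 * s) := by
      rw [← hw, Finset.mul_sum]
      refine Finset.dvd_sum fun j _ => ?_
      rw [show M * ((j.1 + 1) * r j) = (j.1 + 1) * (M * r j) by ring]
      exact Dvd.dvd.mul_left (hj j) (j.1 + 1)
    have hcop : Nat.Coprime (s + 1) s := by
      simpa using Nat.coprime_succ_self_left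
    have hdvd : (s + 1) ∣ 2 * M := by
      have : (s + 1) ∣ (2 * M) * s := by
        rw [show 2 * M * s = M * (2 * s) by ring]; exact hdvd2s
      exact (Nat.Coprime.dvd_of_dvd_mul_right hcop this)
    obtain ⟨t, ht⟩ := hdvd
    -- 2 * s! / ∏ = t
    have htprod : t * ∏ j, Nat.factorial (r j) = 2 * Nat.factorial s := by
      have : (t * ∏ j, Nat.factorial (r j)) * (s + 1)
          = (2 * Nat.factorial s) * (s + 1) := by
        calc (t * ∏ j, Nat.factorial (r j)) * (s + 1)
            = ((s + 1) * t) * ∏ j, Nat.factorial (r j) := by ring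
          _ = (2 * M) * ∏ j, Nat.factorial (r j) := by rw [← ht]
          _ = 2 * ((∏ j, Nat.factorial (r j)) * M) := by ring
          _ = 2 * Nat.factorial (s + 1) := by rw [hspec]
          _ = 2 * ((s + 1) * Nat.factorial s) := by rw [Nat.factorial_succ]
          _ = (2 * Nat.factorial s) * (s + 1) := by ring
      exact Nat.eq_of_mul_eq_mul_right (Nat.succ_pos s) this
    have hdiv : 2 * Nat.factorial s / ∏ j, Nat.factorial (r j) = t :=
      Nat.div_eq_of_eq_mul_left hprodpos htprod.symm
    rw [hdiv, ht]
    exact mul_comm t (s + 1)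
  -- sum up
  have hsum2 : (∑ r ∈ Rset s, 2 * Nat.factorial s / ∏ j, Nat.factorial (r j)) * (s + 1)
      = 2 * ∑ r ∈ Rset s, Nat.multinomial Finset.univ r := by
    rw [Finset.sum_mul, Finset.mul_sum]
    exact Finset.sum_congr rfl fun r hr => hterm r hr
  have : catalan s * (s + 1)
      = (∑ r ∈ Rset s, 2 * Nat.factorial s / ∏ j, Nat.factorial (r j)) * (s + 1) := by
    rw [hsum2, ← h1]; ring
  exact Nat.eq_of_mul_eq_mul_right (Nat.succ_pos s) this
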